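/- Let B be a Banach A-bimodule and let n ≥ 2 be an even integer. If B^(n+1)·B^(n) = A^(n+1), i.e., every element of A^(n+1) has the form b^(n+1)b^(n) with b^(n+1) ∈ B^(n+1) and b^(n) ∈ B^(n), and the left weak topological center Z̃ℓ_{A^(n)}(B^(n)) = {b^(n) ∈ B^(n) : a^(n) ↦ b^(n)a^(n) is weak*-to-weak continuous} equals B^(n), then A is a reflexive Banach space. -/

import Mathlib

open NormedSpace Filter Topology

noncomputable section

universe u

/-- The Arens adjoint of a bounded bilinear map `m : X × Y → Z`:
`⟨adjB m z' x, y⟩ = ⟨z', m x y⟩`.  Its triple iterate `adjB (adjB (adjB m))` is the Arens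
(triple adjoint) extension `m*** : X** × Y** → Z**`. -/
def adjB {X Y Z : Type*} [NormedAddCommGroup X] [NormedSpace ℂ X]
    [NormedAddCommGroup Y] [NormedSpace ℂ Y] [NormedAddCommGroup Z] [NormedSpace ℂ Z]
    (m : X →L[ℂ] Y →L[ℂ] Z) : StrongDual ℂ Z →L[ℂ] X →L[ℂ] StrongDual ℂ Y :=
  ((ContinuousLinearMap.compL ℂ X (Y →L[ℂ] Z) (Y →L[ℂ] ℂ)).flip m).comp
    (ContinuousLinearMap.compL ℂ Y Z ℂ)

/-- A pair consisting of a Banach algebra (carrier `X`, multiplication `mul`) and a Banach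
`X`-bimodule (carrier `Y`, left action `pl`, right action `pr`), recorded through its bounded
(bi)linear structure maps. -/
structure APair : Type (u + 1) where
  X : Type u
  Y : Type u
  [nX : NormedAddCommGroup X]
  [mX : NormedSpace ℂ X]
  [nY : NormedAddCommGroup Y]
  [mY : NormedSpace ℂ Y]
  mul : X →L[ℂ] X →L[ℂ] X
  pl : X →L[ℂ] Y →L[ℂ] Y
  pr : Y →L[ℂ] X →L[ℂ] Y

attribute [instance] APair.nX APair.mX APair.nY APair.mY

/-- Passage to biduals: `X ↦ X**`, `Y ↦ Y**`, with the first Arens product on `X**` and the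
Arens triple-adjoint extensions of the module actions. -/
def APair.bidual (P : APair) : APair where
  X := StrongDual ℂ (StrongDual ℂ P.X)
  Y := StrongDual ℂ (StrongDual ℂ P.Y)
  mul := adjB (adjB (adjB P.mul))
  pl := adjB (adjB (adjB P.pl))
  pr := adjB (adjB (adjB P.pr))

/-- `P.iter k` is the `2k`-th dual level of the pair `P`: the Banach algebra `A^(2k)` acting on
the Banach bimodule `B^(2k)`. -/
def APair.iter (P : APair) : ℕ → APair
  | 0 => P
  | k + 1 => (P.iter k).bidual

variable (A B : Type u) [NonUnitalNormedRing A] [NormedSpace ℂ A]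
  [SMulCommClass ℂ A A] [IsScalarTower ℂ A A] [CompleteSpace A]
  [NormedAddCommGroup B] [NormedSpace ℂ B] [CompleteSpace B]

variable (πl : A →L[ℂ] B →L[ℂ] B) (πr : B →L[ℂ] A →L[ℂ] B)

universe v

/-- A weak-star continuous linear functional on a dual space is evaluation at a point. -/
theorem exists_eval_of_weakdual_continuous {F : Type v} [NormedAddCommGroup F] [NormedSpace ℂ F]
    (φ : StrongDual ℂ (StrongDual ℂ F)) (h : Continuous fun a : WeakDual ℂ F => φ a) :
    ∃ f : F, inclusionInDoubleDual ℂ F f = φ := by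
  set Bp := topDualPairing ℂ F with hBp
  have h0 : Tendsto (fun a : WeakDual ℂ F => φ a) (𝓝 0) (𝓝 0) := by
    have := h.tendsto 0
    simpa [show φ (0 : WeakDual ℂ F) = 0 from map_zero φ] using this
  have hmem : (fun a : WeakDual ℂ F => φ a) ⁻¹' Metric.ball 0 1 ∈ 𝓝 (0 : WeakDual ℂ F) :=
    h0 (Metric.ball_mem_nhds 0 one_pos)
  obtain ⟨U, hU, hUsub⟩ := (Bp.hasBasis_weakBilin).mem_iff.1 hmem
  obtain ⟨s, r, hr, rfl⟩ := (SeminormFamily.basisSets_iff _).1 hU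
  -- kernel inclusion
  have hker : ∀ x : StrongDual ℂ F, (∀ y ∈ s, x y = 0) → φ x = 0 := by
    intro x hx
    have hball : ∀ c : ℂ, ‖φ (c • x)‖ < 1 := by
      intro c
      have hmem2 : (c • x : StrongDual ℂ F) ∈ (s.sup Bp.toSeminormFamily).ball 0 r := by
        rw [Seminorm.mem_ball_zero]
        refine Seminorm.finset_sup_apply_lt hr ?_
        intro i hi
        show ‖Bp (c • x) i‖ < r
        have hzero : Bp (c • x) i = 0 := by
          show (c • x : StrongDual ℂ F) i = 0
          simp [hx i hi]
        rw [hzero]; simpa using hr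
      have := hUsub hmem2
      exact mem_ball_zero_iff.mp (show φ (c • x) ∈ Metric.ball (0 : ℂ) 1 from this)
    by_contra hne
    have hpos : 0 < ‖φ x‖ := norm_pos_iff.mpr hne
    have := hball ((2 / ‖φ x‖ : ℝ) : ℂ)
    rw [map_smul, norm_smul] at this
    have : (2 : ℝ) < 1 := by
      have hn : ‖((2 / ‖φ x‖ : ℝ) : ℂ)‖ = 2 / ‖φ x‖ := by
        rw [Complex.norm_real, Real.norm_of_nonneg (by positivity)]
      rw [hn, div_mul_cancel₀] at this
      · exact this
      · exact ne_of_gt hpos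
    linarith
  -- span argument
  let L : {y // y ∈ s} → (StrongDual ℂ F →ₗ[ℂ] ℂ) := fun i => Bp.flip i.1
  have hK : (φ : StrongDual ℂ F →ₗ[ℂ] ℂ) ∈ Submodule.span ℂ (Set.range L) := by
    apply mem_span_of_iInf_ker_le_ker (L := L)
    intro x hxmem
    have hx : ∀ y ∈ s, x y = 0 := by
      intro y hy
      have := (Submodule.mem_iInf _).1 hxmem ⟨y, hy⟩
      simpa [L, LinearMap.mem_ker, Bp, topDualPairing_apply] using this
    simpa [LinearMap.mem_ker] using hker x hx
  have hle : Submodule.span ℂ (Set.range L) ≤ LinearMap.range Bp.flip := by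
    rw [Submodule.span_le]
    rintro _ ⟨i, rfl⟩
    exact ⟨i.1, rfl⟩
  obtain ⟨f, hf⟩ := hle hK
  refine ⟨f, ?_⟩
  ext x
  have := LinearMap.congr_fun hf x
  simpa [Bp, topDualPairing_apply] using this

/-- If the dual of a Banach space is reflexive then so is the space. -/
theorem surjective_incl_of_surjective_incl_dual {X : Type v} [NormedAddCommGroup X]
    [NormedSpace ℂ X] [CompleteSpace X]
    (h : Function.Surjective (inclusionInDoubleDual ℂ (StrongDual ℂ X))) :
    Function.Surjective (inclusionInDoubleDual ℂ X) := by
  intro F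
  by_contra hF
  push_neg at hF
  have hFnot : F ∉ Set.range (inclusionInDoubleDual ℂ X) := by
    rintro ⟨x, hx⟩; exact hF x hx
  have hclosed : IsClosed (Set.range (inclusionInDoubleDual ℂ X)) := by
    have : Isometry (inclusionInDoubleDual ℂ X) := (inclusionInDoubleDualLi ℂ (E := X)).isometry
    exact this.isClosedEmbedding.isClosed_range
  have hconv : Convex ℝ (Set.range (inclusionInDoubleDual ℂ X)) := by
    rintro _ ⟨u, rfl⟩ _ ⟨v, rfl⟩ a b _ _ _
    refine ⟨a • u + b • v, ?_⟩
    rw [map_add, ContinuousLinearMap.map_smul_of_tower, ContinuousLinearMap.map_smul_of_tower]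
  obtain ⟨g, u, hga, hgF⟩ :=
    RCLike.geometric_hahn_banach_closed_point (𝕜 := ℂ) hconv hclosed hFnot
  have hu : 0 < u := by
    have := hga 0 ⟨0, map_zero _⟩
    simpa using this
  obtain ⟨f, rfl⟩ := h g
  have hf0 : f = 0 := by
    ext x
    by_contra hne
    set w := f x with hw
    have hb : ∀ c : ℂ, (Complex.re (c * w)) < u := by
      intro c
      have hmem : inclusionInDoubleDual ℂ X (c • x) ∈
          Set.range (inclusionInDoubleDual ℂ X) := ⟨c • x, rfl⟩
      have := hga _ hmem
      simpa [dual_def, map_smul, smul_eq_mul] using this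
    have := hb ((u + 1) * w⁻¹)
    rw [mul_assoc, inv_mul_cancel₀ hne, mul_one] at this
    simp at this
    linarith
  have : (inclusionInDoubleDual ℂ (StrongDual ℂ X)) f F = 0 := by
    rw [hf0]; simp
  rw [this] at hgF
  simp at hgF
  linarith


/-- The base pair: the Banach algebra `A` together with the Banach `A`-bimodule `B`. -/
def basePair : APair where
  X := A
  Y := B
  mul := ContinuousLinearMap.mul ℂ A
  pl := πl
  pr := πr

/-- with `n = 2*(j+1) ≥ 2` even: if `B^(n+1)·B^(n) = A^(n+1)` (every element of
`A^(n+1)` has the form `b^(n+1)b^(n)`, where `⟨b^(n+1)b^(n), a^(n)⟩ = ⟨b^(n+1), b^(n)a^(n)⟩`)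
and `Z̃ℓ_{A^(n)}(B^(n)) = B^(n)` (each `b^(n)` has `a^(n) ↦ b^(n)a^(n)` weak*-to-weak
continuous), then `A` is reflexive.  Here `Q` is level `n-2`, `A^(n) = (Q.X)**`,
`B^(n) = (Q.Y)**`, and the right action of `A^(n)` on `B^(n)` is `adjB³ Q.pr`. -/
theorem stmt12
    (hℓ : ∀ (a b : A) (x : B), πl (a * b) x = πl a (πl b x))
    (hr : ∀ (x : B) (a b : A), πr (πr x a) b = πr x (a * b))
    (hm : ∀ (a : A) (x : B) (b : A), πr (πl a x) b = πl a (πr x b))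
    (j : ℕ)
    (hfac : ∀ a3 : StrongDual ℂ (StrongDual ℂ (StrongDual ℂ ((basePair A B πl πr).iter j).X)),
      ∃ (b3 : StrongDual ℂ (StrongDual ℂ (StrongDual ℂ ((basePair A B πl πr).iter j).Y)))
        (b2 : StrongDual ℂ (StrongDual ℂ ((basePair A B πl πr).iter j).Y)),
        a3 = b3.comp (adjB (adjB (adjB ((basePair A B πl πr).iter j).pr)) b2))
    (hz : ∀ b2 : StrongDual ℂ (StrongDual ℂ ((basePair A B πl πr).iter j).Y),
      Continuous fun a : WeakDual ℂ (StrongDual ℂ ((basePair A B πl πr).iter j).X) =>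
        (adjB (adjB (adjB ((basePair A B πl πr).iter j).pr)) b2 a :
          WeakSpace ℂ (StrongDual ℂ (StrongDual ℂ ((basePair A B πl πr).iter j).Y)))) :
    Function.Surjective (inclusionInDoubleDual ℂ A) := by
  set P := basePair A B πl πr with hP
  have key : Function.Surjective
      (inclusionInDoubleDual ℂ (StrongDual ℂ ((P.iter j).X))) := by
    intro a3
    obtain ⟨b3, b2, rfl⟩ := hfac a3
    apply exists_eval_of_weakdual_continuous
    exact b3.continuous.comp (hz b2)
  have down : ∀ k : ℕ, Function.Surjective
      (inclusionInDoubleDual ℂ (StrongDual ℂ ((P.iter k).X))) →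
      Function.Surjective (inclusionInDoubleDual ℂ A) := by
    intro k
    induction k with
    | zero =>
      intro h
      exact surjective_incl_of_surjective_incl_dual (X := A) h
    | succ k ih =>
      intro h
      exact ih (surjective_incl_of_surjective_incl_dual (X := StrongDual ℂ ((P.iter k).X))
        (surjective_incl_of_surjective_incl_dual (X := StrongDual ℂ (StrongDual ℂ ((P.iter k).X))) h))
  exact down j key

end
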